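/- Let E ∈ ℝ satisfy Δ(E)² = 1 and φ_q(E) ≠ 0 (a band edge that is not a Dirichlet eigenvalue). Then J_1(E) = −(φ_q(E)/a⁰_0)·Σ_{k=0}^{p} v_k·(θ_k(E) + (φ̂(E)/φ_q(E))·φ_k(E))², where J_1(λ) = −(1/a⁰_0)·Σ_{k=0}^{p} v_k·(φ_q(λ)θ_k(λ)² + 2φ̂(λ)θ_k(λ)φ_k(λ) − θ_{q+1}(λ)φ_k(λ)²). -/

import Mathlib

open Polynomial Asymptotics Filter

theorem stmt17
    (q : ℕ) (hq : 1 ≤ q)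
    (a b : ℤ → ℝ)
    (ha_per : ∀ n : ℤ, a (n + (q : ℤ)) = a n)
    (hb_per : ∀ n : ℤ, b (n + (q : ℤ)) = b n)
    (ha_pos : ∀ n : ℤ, 0 < a n)
    (θ φ : ℤ → Polynomial ℝ)
    (hθ_rec : ∀ n : ℤ,
      C (a (n - 1)) * θ (n - 1) + C (a n) * θ (n + 1) + C (b n) * θ n = X * θ n)
    (hφ_rec : ∀ n : ℤ,
      C (a (n - 1)) * φ (n - 1) + C (a n) * φ (n + 1) + C (b n) * φ n = X * φ n)
    (hθ0 : θ 0 = 1) (hθ1 : θ 1 = 0) (hφ0 : φ 0 = 0) (hφ1 : φ 1 = 1)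
    (Δl : Polynomial ℝ) (hΔl : Δl = C ((2:ℝ)⁻¹) * (φ ((q:ℤ) + 1) + θ (q:ℤ)))
    (φh : Polynomial ℝ) (hφh : φh = C ((2:ℝ)⁻¹) * (φ ((q:ℤ) + 1) - θ (q:ℤ)))
    (p : ℕ) (hp : 1 ≤ p)
    (v : ℤ → ℝ)
    (hv_supp : ∀ n : ℤ, (n < 0 ∨ (p:ℤ) < n) → v n = 0)
    (hv0 : v 0 ≠ 0) (hvp : v (p:ℤ) ≠ 0)
    (J1 : ℝ → ℝ)
    (hJ1 : ∀ x : ℝ, J1 x = -(1 / a 0) * ∑ k ∈ Finset.range (p + 1), v (k : ℤ) *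
      ((φ (q:ℤ)).eval x * ((θ (k:ℤ)).eval x) ^ 2
        + 2 * φh.eval x * (θ (k:ℤ)).eval x * (φ (k:ℤ)).eval x
        - (θ ((q:ℤ) + 1)).eval x * ((φ (k:ℤ)).eval x) ^ 2))
    (E : ℝ) (hΔE : (Δl.eval E) ^ 2 = 1) (hφqE : (φ (q:ℤ)).eval E ≠ 0) :
    J1 E = -((φ (q:ℤ)).eval E / a 0) * ∑ k ∈ Finset.range (p + 1), v (k : ℤ) *
      ((θ (k:ℤ)).eval E + φh.eval E / (φ (q:ℤ)).eval E * (φ (k:ℤ)).eval E) ^ 2 := by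
  have hW : ∀ n : ℕ, C (a (n:ℤ)) * (θ (n:ℤ) * φ ((n:ℤ) + 1) - θ ((n:ℤ) + 1) * φ (n:ℤ))
      = C (a 0) := by
    intro n
    induction n with
    | zero => simp [hθ0, hθ1, hφ0, hφ1]
    | succ n ih =>
      have hθ := hθ_rec ((n:ℤ) + 1)
      have hφ := hφ_rec ((n:ℤ) + 1)
      simp only [add_sub_cancel_right] at hθ hφ
      push_cast
      linear_combination ih - φ ((n:ℤ) + 1) * hθ + θ ((n:ℤ) + 1) * hφ
  have haq : a (q:ℤ) = a 0 := by have := ha_per 0; simpa using this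
  have ha0 : a 0 ≠ 0 := (ha_pos 0).ne'
  have hWq : (θ (q:ℤ)).eval E * (φ ((q:ℤ) + 1)).eval E
      - (θ ((q:ℤ) + 1)).eval E * (φ (q:ℤ)).eval E = 1 := by
    have := congrArg (Polynomial.eval E) (hW q)
    simp [haq] at this
    field_simp at this
    linarith [this]
  have key : (φh.eval E) ^ 2 = -((θ ((q:ℤ) + 1)).eval E) * (φ (q:ℤ)).eval E := by
    rw [hφh]
    rw [hΔl] at hΔE
    simp only [eval_mul, eval_C, eval_add, eval_sub] at hΔE ⊢
    nlinarith [hΔE, hWq]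
  rw [hJ1, Finset.mul_sum, Finset.mul_sum]
  apply Finset.sum_congr rfl
  intro k _
  field_simp
  linear_combination (v (k:ℤ) * ((φ (k:ℤ)).eval E) ^ 2) * key
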